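/- Let P ⊂ ℝ^n be a convex polytope and v a point in the affine span of P with v ∉ P. If a point p in the relative interior of a face f of P is visible from v, then every point of f is visible from v. -/

import Mathlib

open Set

/-- Key algebraic identity: a convex combination of `x ∈ [v,q]` and `q'`
lies on the segment `[v,p]` when `p` is between `q` and `q'`. -/
lemma key_identity {n : ℕ} (v q q' x p : Fin n → ℝ) (b l : ℝ) (hb : 0 ≤ b) (hb1 : b < 1)
    (hl0 : 0 < l) (hl1 : l < 1)
    (hx : (1 - b) • v + b • q = x) (hpeq : p = (1 - l) • q + l • q') :
    (1 - l * b / (1 - l * (1 - b))) • x + (l * b / (1 - l * (1 - b))) • q'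
      = (1 - b / (1 - l * (1 - b))) • v + (b / (1 - l * (1 - b))) • p := by
  have hd : (1:ℝ) - l * (1 - b) ≠ 0 := by nlinarith
  rw [← hx, hpeq]
  match_scalars <;> field_simp <;> ring

/-- If `p` is in the intrinsic interior of `f` and `q ∈ f`, then `p` lies strictly between
`q` and some point `q'` of `f`. -/
lemma relint_between {n : ℕ} (f : Set (Fin n → ℝ)) (p q : Fin n → ℝ)
    (hp : p ∈ intrinsicInterior ℝ f) (hq : q ∈ f) :
    ∃ q' ∈ f, ∃ l : ℝ, 0 < l ∧ l < 1 ∧ p = (1 - l) • q + l • q' := by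
  obtain ⟨p', hp', hcoe⟩ := mem_intrinsicInterior.1 hp
  have hpA : p ∈ affineSpan ℝ f := hcoe ▸ p'.2
  have hqA : q ∈ affineSpan ℝ f := subset_affineSpan ℝ f hq
  set c : ℝ → affineSpan ℝ f := fun t =>
    ⟨AffineMap.lineMap q p t, AffineMap.lineMap_mem t hqA hpA⟩ with hc
  have hcont : Continuous c :=
    Continuous.subtype_mk (AffineMap.lineMap_continuous) _
  have hc1 : c 1 = p' := by
    apply Subtype.ext
    simp [hc, hcoe]
  have hopen : IsOpen (c ⁻¹' interior (((↑) : affineSpan ℝ f → _) ⁻¹' f)) :=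
    hcont.isOpen_preimage _ isOpen_interior
  have h1 : (1 : ℝ) ∈ c ⁻¹' interior (((↑) : affineSpan ℝ f → _) ⁻¹' f) := by
    simp only [mem_preimage, hc1]; exact hp'
  obtain ⟨ε, hε, hball⟩ := Metric.isOpen_iff.1 hopen 1 h1
  set t : ℝ := 1 + ε / 2 with ht
  have htmem : t ∈ c ⁻¹' interior (((↑) : affineSpan ℝ f → _) ⁻¹' f) := by
    apply hball
    simp only [Metric.mem_ball, Real.dist_eq, ht]
    rw [add_sub_cancel_left, abs_of_pos (by linarith)]
    linarith
  have hq'f : AffineMap.lineMap q p t ∈ f := by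
    have h2 : c t ∈ ((↑) : affineSpan ℝ f → _) ⁻¹' f :=
      interior_subset (mem_preimage.1 htmem)
    exact h2
  have ht1 : (1 : ℝ) < t := by rw [ht]; linarith
  have ht0 : (0 : ℝ) < t := by linarith
  refine ⟨AffineMap.lineMap q p t, hq'f, 1 / t, by positivity, by
    rw [div_lt_one ht0]; exact ht1, ?_⟩
  rw [AffineMap.lineMap_apply_module]
  rw [smul_add, smul_smul, smul_smul]
  have h3 : (1 / t) * t = 1 := by field_simp
  rw [h3, one_smul, ← add_assoc, ← add_smul]
  have h4 : (1 - 1 / t) + 1 / t * (1 - t) = 0 := by field_simp; ring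
  rw [h4, zero_smul, zero_add]

/-- If `P ⊆ ℝⁿ` is a polytope, `v` is in the affine span of `P` but outside `P`, and some
point `p` in the relative interior of a face `f` of `P` is visible from `v` (the segment
`[v,p]` meets `P` only in `p`), then every point of `f` is visible from `v`. -/
theorem stmt_5 (n : ℕ) (V : Finset (Fin n → ℝ)) (P : Set (Fin n → ℝ))
    (hP : P = convexHull ℝ ↑V)
    (v : Fin n → ℝ) (hv : v ∈ affineSpan ℝ P) (hvP : v ∉ P)
    (f : Set (Fin n → ℝ)) (hf : IsExposed ℝ P f)
    (p : Fin n → ℝ) (hp : p ∈ intrinsicInterior ℝ f)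
    (hvis : segment ℝ v p ∩ P = {p}) :
    ∀ q ∈ f, segment ℝ v q ∩ P = {q} := by
  have hPconv : Convex ℝ P := hP ▸ convex_convexHull ℝ _
  have hfP : f ⊆ P := hf.subset
  have hpP : p ∈ P := hfP (intrinsicInterior_subset hp)
  intro q hq
  obtain ⟨q', hq'f, l, hl0, hl1, hpeq⟩ := relint_between f p q hp hq
  apply Subset.antisymm
  · -- segment v q ∩ P ⊆ {q}
    rintro x ⟨hxseg, hxP⟩
    obtain ⟨a, b, ha, hb, hab, hx⟩ := hxseg
    by_cases hb1 : b = 1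
    · have ha0 : a = 0 := by linarith
      simp only [ha0, hb1, zero_smul, one_smul, zero_add] at hx
      exact hx ▸ rfl
    · exfalso
      have hb1' : b < 1 := lt_of_le_of_ne (by linarith) hb1
      have ha' : a = 1 - b := by linarith
      rw [ha'] at hx
      have hd0 : (0:ℝ) < 1 - l * (1 - b) := by nlinarith
      have hkey := key_identity v q q' x p b l hb hb1' hl0 hl1 hx hpeq
      have hμ0 : 0 ≤ b / (1 - l * (1 - b)) := by positivity
      have hμ1 : b / (1 - l * (1 - b)) < 1 := by
        rw [div_lt_one hd0]; nlinarith
      have hu0 : 0 ≤ l * b / (1 - l * (1 - b)) := by positivity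
      have hu1 : l * b / (1 - l * (1 - b)) ≤ 1 := by
        rw [div_le_one hd0]; nlinarith
      have hyP : (1 - l * b / (1 - l * (1 - b))) • x + (l * b / (1 - l * (1 - b))) • q' ∈ P :=
        hPconv hxP (hfP hq'f) (by linarith) hu0 (by ring)
      rw [hkey] at hyP
      have hyseg : (1 - b / (1 - l * (1 - b))) • v + (b / (1 - l * (1 - b))) • p
          ∈ segment ℝ v p :=
        ⟨1 - b / (1 - l * (1 - b)), b / (1 - l * (1 - b)), by linarith, hμ0, by ring, rfl⟩
      have hyp : (1 - b / (1 - l * (1 - b))) • v + (b / (1 - l * (1 - b))) • p = p := by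
        have h5 : (1 - b / (1 - l * (1 - b))) • v + (b / (1 - l * (1 - b))) • p
            ∈ segment ℝ v p ∩ P := ⟨hyseg, hyP⟩
        rwa [hvis] at h5
      -- this forces v = p, contradicting v ∉ P
      have h6 : (1 - b / (1 - l * (1 - b))) • v = (1 - b / (1 - l * (1 - b))) • p := by
        have h7 := eq_sub_of_add_eq hyp
        rw [h7, sub_smul, one_smul]
      have hne : (1 : ℝ) - b / (1 - l * (1 - b)) ≠ 0 := ne_of_gt (by linarith)
      have hvp : v = p := smul_right_injective _ hne h6
      exact hvP (hvp ▸ hpP)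
  · -- {q} ⊆ segment v q ∩ P
    rintro x rfl
    exact ⟨right_mem_segment ℝ v x, hfP hq⟩
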